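/- Let S be a nonempty set and b : S → ℝ^n a map with b_i(X) > 0 for all X ∈ S and all i, and let G = ∪_{X ∈ S} [0, b(X)]. Let z ∈ ℝ^n with z_i > 0 for all i, and suppose the set { min_{1≤i≤n} b_i(X)/z_i : X ∈ S } is bounded above. Then sup { α ≥ 0 : α·z ∈ G } = sup_{X ∈ S} min_{1≤i≤n} b_i(X)/z_i; that is, the projection of z along the halfline from the origin onto the upper boundary of G is determined by an extended max-min problem. -/
import Mathlib


/-- The minimum of a finite family of reals indexed by `Fin n`, `n > 0`. -/
noncomputable def minOver {n : ℕ} (hn : 0 < n) (v : Fin n → ℝ) : ℝ :=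
  Finset.univ.inf' (Finset.univ_nonempty_iff.mpr (Fin.pos_iff_nonempty.mp hn)) v

/-- The projection of `z` (with strictly positive coordinates) along the halfline from the
origin onto the upper boundary of the union of boxes `G = ⋃_X [0, b(X)]` is determined by an
extended max-min problem: `sup {α ≥ 0 : α • z ∈ G} = sup_X min_i b_i(X) / z_i`. -/
theorem stmt5 {n : ℕ} (hn : 0 < n) {S : Type*} [Nonempty S]
    (b : S → Fin n → ℝ) (hb : ∀ X i, 0 < b X i)
    (z : Fin n → ℝ) (hz : ∀ i, 0 < z i)
    (hbdd : BddAbove (Set.range fun X : S => minOver hn fun i => b X i / z i)) :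
    sSup {α : ℝ | 0 ≤ α ∧ α • z ∈ ⋃ X : S, Set.Icc (0 : Fin n → ℝ) (b X)} =
      ⨆ X : S, minOver hn fun i => b X i / z i := by
  set m : S → ℝ := fun X => minOver hn fun i => b X i / z i with hm
  set A := {α : ℝ | 0 ≤ α ∧ α • z ∈ ⋃ X : S, Set.Icc (0 : Fin n → ℝ) (b X)} with hA
  have hmpos : ∀ X, 0 ≤ m X := fun X => by
    apply Finset.le_inf'
    intro i _
    exact (div_pos (hb X i) (hz i)).le
  -- membership characterization
  have hmem : ∀ α : ℝ, α ∈ A ↔ 0 ≤ α ∧ ∃ X : S, α ≤ m X := by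
    intro α
    constructor
    · rintro ⟨hα, hαz⟩
      refine ⟨hα, ?_⟩
      obtain ⟨s, hs⟩ := Set.mem_iUnion.mp hαz
      refine ⟨s, Finset.le_inf' _ _ fun i _ => ?_⟩
      have := hs.2 i
      simp only [Pi.smul_apply, smul_eq_mul] at this
      exact (le_div_iff₀ (hz i)).mpr this
    · rintro ⟨hα, X, hX⟩
      refine ⟨hα, Set.mem_iUnion.mpr ⟨X, ?_, ?_⟩⟩
      · intro i
        simp only [Pi.smul_apply, smul_eq_mul, Pi.zero_apply]
        exact mul_nonneg hα (hz i).le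
      · intro i
        simp only [Pi.smul_apply, smul_eq_mul]
        have : α ≤ b X i / z i := le_trans hX (Finset.inf'_le _ (Finset.mem_univ i))
        exact (le_div_iff₀ (hz i)).mp this
  have hX0 : ∃ X : S, True := ⟨Classical.arbitrary S, trivial⟩
  obtain ⟨X0, -⟩ := hX0
  have hAne : A.Nonempty := ⟨m X0, (hmem _).mpr ⟨hmpos X0, X0, le_refl _⟩⟩
  obtain ⟨M, hM⟩ := id hbdd
  have hAbdd : BddAbove A := by
    refine ⟨M, fun α hα => ?_⟩
    obtain ⟨-, X, hX⟩ := (hmem α).mp hα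
    exact hX.trans (hM ⟨X, rfl⟩)
  apply le_antisymm
  · apply csSup_le hAne
    intro α hα
    obtain ⟨-, X, hX⟩ := (hmem α).mp hα
    exact hX.trans (le_ciSup hbdd X)
  · apply ciSup_le
    intro X
    exact le_csSup hAbdd ((hmem _).mpr ⟨hmpos X, X, le_refl _⟩)
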